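/- Let X be a symmetric positive semidefinite n × n real matrix and Y an m × n real matrix satisfying: (i) there is a > 0 with ⟨x, Xx⟩ ≥ a‖x‖² for all x ∈ ℝⁿ with Yx = 0; (ii) ‖X‖ ≤ b in the spectral norm; (iii) there is c > 0 with ‖Yᵀη‖ ≥ c‖η‖ for all η ∈ ℝᵐ. Then for every y ∈ ℝⁿ and ξ ∈ ℝᵐ the saddle point system E(x, η) = (y, ξ), where E := [[X, Yᵀ],[Y, 0]], has a unique solution (x, η), and this solution satisfies ‖x‖ ≤ (1/a)‖y‖ + (1 + b/a)(1/c)‖ξ‖ and ‖η‖ ≤ (1 + b/a)(1/c)‖y‖ + (b/c²)(1 + b/a)‖ξ‖. -/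

import Mathlib

open Matrix

/-- The vector in Euclidean space obtained by applying the matrix `M` to `x`
(matrix-vector multiplication, viewed as a map between Euclidean spaces). -/
noncomputable def mulVecE {ι κ : Type} [Fintype ι] [Fintype κ] [DecidableEq κ]
    (M : Matrix ι κ ℝ) (x : EuclideanSpace ℝ κ) : EuclideanSpace ℝ ι :=
  Matrix.toEuclideanLin M x

/-- The spectral norm (Euclidean operator norm) of a matrix. -/
noncomputable def specNorm {ι κ : Type} [Fintype ι] [Fintype κ] [DecidableEq κ]
    (M : Matrix ι κ ℝ) : ℝ :=
  ‖LinearMap.toContinuousLinearMap (Matrix.toEuclideanLin M)‖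

set_option maxHeartbeats 1000000 in
/-- Brezzi theory for the saddle point system `E = [[X, Yᵀ],[Y, 0]]`:
existence, uniqueness, and bounds on the solution. -/
theorem stmt0 (n m : ℕ)
    (X : Matrix (Fin n) (Fin n) ℝ) (Y : Matrix (Fin m) (Fin n) ℝ)
    (hXpsd : X.PosSemidef)
    (a b c : ℝ) (ha : 0 < a) (hc : 0 < c)
    (hcoer : ∀ x : EuclideanSpace ℝ (Fin n),
      mulVecE Y x = 0 → a * ‖x‖ ^ 2 ≤ inner ℝ x (mulVecE X x))
    (hb : specNorm X ≤ b)
    (hYt : ∀ η : EuclideanSpace ℝ (Fin m), c * ‖η‖ ≤ ‖mulVecE Yᵀ η‖)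
    (y : EuclideanSpace ℝ (Fin n)) (ξ : EuclideanSpace ℝ (Fin m)) :
    ∃ x : EuclideanSpace ℝ (Fin n), ∃ η : EuclideanSpace ℝ (Fin m),
      (mulVecE X x + mulVecE Yᵀ η = y ∧ mulVecE Y x = ξ) ∧
      (∀ x' : EuclideanSpace ℝ (Fin n), ∀ η' : EuclideanSpace ℝ (Fin m),
        (mulVecE X x' + mulVecE Yᵀ η' = y ∧ mulVecE Y x' = ξ) → x' = x ∧ η' = η) ∧
      ‖x‖ ≤ (1 / a) * ‖y‖ + (1 + b / a) * (1 / c) * ‖ξ‖ ∧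
      ‖η‖ ≤ (1 + b / a) * (1 / c) * ‖y‖ + (b / c ^ 2) * (1 + b / a) * ‖ξ‖ := by
  classical
  set A : EuclideanSpace ℝ (Fin n) →ₗ[ℝ] EuclideanSpace ℝ (Fin n) :=
    Matrix.toEuclideanLin X with hAdef
  set B : EuclideanSpace ℝ (Fin n) →ₗ[ℝ] EuclideanSpace ℝ (Fin m) :=
    Matrix.toEuclideanLin Y with hBdef
  set Bt : EuclideanSpace ℝ (Fin m) →ₗ[ℝ] EuclideanSpace ℝ (Fin n) :=
    Matrix.toEuclideanLin Yᵀ with hBtdef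
  have hb0 : (0:ℝ) ≤ b := le_trans (norm_nonneg _) hb
  have hco : ∀ z, B z = 0 → a * ‖z‖ ^ 2 ≤ inner ℝ z (A z) := fun z hz => hcoer z hz
  have hYt' : ∀ η, c * ‖η‖ ≤ ‖Bt η‖ := fun η => hYt η
  have hAb : ∀ z, ‖A z‖ ≤ b * ‖z‖ := fun z =>
    (LinearMap.toContinuousLinearMap (Matrix.toEuclideanLin X)).le_of_opNorm_le hb z
  have hBt_adj : Bt = LinearMap.adjoint B := by
    rw [hBtdef, hBdef, ← Matrix.conjTranspose_eq_transpose_of_trivial,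
      Matrix.toEuclideanLin_conjTranspose_eq_adjoint]
  have hBtinner : ∀ (η : EuclideanSpace ℝ (Fin m)) (v : EuclideanSpace ℝ (Fin n)),
      (inner ℝ (Bt η) v : ℝ) = inner ℝ η (B v) := by
    intro η v
    rw [hBt_adj]
    exact LinearMap.adjoint_inner_left B v η
  have hA_adj : A = LinearMap.adjoint A := by
    conv_lhs => rw [hAdef, ← hXpsd.1]
    rw [Matrix.toEuclideanLin_conjTranspose_eq_adjoint]
  have hA_sym : ∀ u v, (inner ℝ (A u) v : ℝ) = inner ℝ u (A v) := by
    intro u v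
    calc (inner ℝ (A u) v : ℝ) = inner ℝ ((LinearMap.adjoint A) u) v := by rw [← hA_adj]
    _ = inner ℝ u (A v) := LinearMap.adjoint_inner_left A v u
  have hBt_inj : ∀ η, Bt η = 0 → η = 0 := by
    intro η hη
    have := hYt' η
    rw [hη, norm_zero] at this
    have : ‖η‖ ≤ 0 := by nlinarith [norm_nonneg η]
    exact norm_le_zero_iff.mp this
  -- B is surjective
  have hBsurj : ∀ ζ : EuclideanSpace ℝ (Fin m), ∃ z, B z = ζ := by
    have hperp : (LinearMap.range B)ᗮ = ⊥ := by
      rw [Submodule.eq_bot_iff]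
      intro η hη
      apply hBt_inj
      have h1 : (inner ℝ (Bt η) (Bt η) : ℝ) = 0 := by
        rw [hBtinner, real_inner_comm]
        exact ((Submodule.mem_orthogonal _ _).1 hη _ (LinearMap.mem_range_self B (Bt η)))
      exact inner_self_eq_zero.mp h1
    have : LinearMap.range B = ⊤ := (Submodule.orthogonal_eq_bot_iff).mp hperp
    intro ζ
    exact (LinearMap.range_eq_top.mp this) ζ
  set V : Submodule ℝ (EuclideanSpace ℝ (Fin n)) := LinearMap.ker B with hVdef
  -- Vᗮ = range Bt
  have hVperp : Vᗮ = LinearMap.range Bt := by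
    have h1 : LinearMap.range Bt ≤ Vᗮ := by
      rintro _ ⟨η, rfl⟩
      rw [Submodule.mem_orthogonal]
      intro u hu
      rw [real_inner_comm, hBtinner, LinearMap.mem_ker.mp hu, inner_zero_right]
    have h2 : (LinearMap.range Bt)ᗮ ≤ V := by
      intro w hw
      rw [LinearMap.mem_ker]
      have : (inner ℝ (B w) (B w) : ℝ) = 0 := by
        rw [← hBtinner]
        exact (Submodule.mem_orthogonal _ _).1 hw _ (LinearMap.mem_range_self Bt (B w))
      exact inner_self_eq_zero.mp this
    refine le_antisymm ?_ h1
    calc Vᗮ ≤ ((LinearMap.range Bt)ᗮ)ᗮ := Submodule.orthogonal_le h2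
    _ = LinearMap.range Bt := Submodule.orthogonal_orthogonal _
  obtain ⟨z, hz⟩ := hBsurj ξ
  set x₀ : EuclideanSpace ℝ (Fin n) := z - (V.orthogonalProjectionOnto z : EuclideanSpace ℝ (Fin n))
    with hx₀def
  have hx₀perp : x₀ ∈ Vᗮ := V.sub_starProjection_mem_orthogonal z
  have hBx₀ : B x₀ = ξ := by
    rw [hx₀def, map_sub, hz, LinearMap.mem_ker.mp (V.orthogonalProjectionOnto z).2, sub_zero]
  have hx₀n : ‖x₀‖ ≤ (1 / c) * ‖ξ‖ := by
    obtain ⟨η₀, hη₀⟩ := hVperp ▸ hx₀perp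
    have h1 : ‖x₀‖ ^ 2 = inner ℝ η₀ ξ := by
      rw [← hBx₀, ← hBtinner, hη₀, real_inner_self_eq_norm_sq]
    have h2 : (inner ℝ η₀ ξ : ℝ) ≤ ‖η₀‖ * ‖ξ‖ := real_inner_le_norm η₀ ξ
    have h3 : c * ‖η₀‖ ≤ ‖x₀‖ := by rw [← hη₀]; exact hYt' η₀
    have h4 : ‖x₀‖ ^ 2 ≤ ‖η₀‖ * ‖ξ‖ := by rw [h1]; exact h2
    rcases (norm_nonneg x₀).eq_or_lt with h0 | h0
    · rw [← h0]; positivity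
    · have h5 : ‖x₀‖ * (c * ‖x₀‖) ≤ ‖x₀‖ * ‖ξ‖ := by
        calc ‖x₀‖ * (c * ‖x₀‖) = c * ‖x₀‖ ^ 2 := by ring
        _ ≤ c * (‖η₀‖ * ‖ξ‖) := mul_le_mul_of_nonneg_left h4 hc.le
        _ = (c * ‖η₀‖) * ‖ξ‖ := by ring
        _ ≤ ‖x₀‖ * ‖ξ‖ := mul_le_mul_of_nonneg_right h3 (norm_nonneg ξ)
      have h6 : c * ‖x₀‖ ≤ ‖ξ‖ := le_of_mul_le_mul_left h5 h0
      calc ‖x₀‖ = (1 / c) * (c * ‖x₀‖) := by field_simp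
      _ ≤ (1 / c) * ‖ξ‖ := mul_le_mul_of_nonneg_left h6 (by positivity)
  -- the operator on V
  set P := V.orthogonalProjectionOnto with hPdef
  set T : V →ₗ[ℝ] V := (P : EuclideanSpace ℝ (Fin n) →ₗ[ℝ] V).comp (A.domRestrict V) with hTdef
  have hPinner : ∀ (w : EuclideanSpace ℝ (Fin n)) (v : V),
      (inner ℝ w (v : EuclideanSpace ℝ (Fin n)) : ℝ)
        = inner ℝ ((P w : EuclideanSpace ℝ (Fin n))) (v : EuclideanSpace ℝ (Fin n)) := by
    intro w v
    have h1 : w - (P w : EuclideanSpace ℝ (Fin n)) ∈ Vᗮ :=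
      V.sub_starProjection_mem_orthogonal w
    have h2 : (inner ℝ (w - (P w : EuclideanSpace ℝ (Fin n)))
        (v : EuclideanSpace ℝ (Fin n)) : ℝ) = 0 := by
      rw [real_inner_comm]
      exact (Submodule.mem_orthogonal _ _).1 h1 _ v.2
    rw [inner_sub_left] at h2
    linarith
  have hTapp : ∀ v : V, T v = P (A (v : EuclideanSpace ℝ (Fin n))) := fun v => rfl
  have hTker : ∀ v : V, T v = 0 → v = 0 := by
    intro v hv
    have hAv := hco (v : EuclideanSpace ℝ (Fin n)) (LinearMap.mem_ker.mp v.2)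
    have h0 : (inner ℝ ((v : EuclideanSpace ℝ (Fin n))) (A (v : EuclideanSpace ℝ (Fin n))) : ℝ)
        = 0 := by
      rw [real_inner_comm, hPinner (A (v : EuclideanSpace ℝ (Fin n))) v, ← hTapp, hv]
      simp
    rw [h0] at hAv
    have h9 : ‖(v : EuclideanSpace ℝ (Fin n))‖ ^ 2 ≤ 0 :=
      le_of_mul_le_mul_left
        (show a * ‖(v : EuclideanSpace ℝ (Fin n))‖ ^ 2 ≤ a * 0 by linarith) ha
    have h10 : ‖(v : EuclideanSpace ℝ (Fin n))‖ ≤ 0 := by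
      nlinarith [norm_nonneg (v : EuclideanSpace ℝ (Fin n))]
    exact Subtype.ext (norm_le_zero_iff.mp h10)
  have hTsurj : Function.Surjective T :=
    LinearMap.injective_iff_surjective.mp (LinearMap.ker_eq_bot.mp (LinearMap.ker_eq_bot'.mpr hTker))
  obtain ⟨u, hu⟩ := hTsurj (P (y - A x₀))
  set x : EuclideanSpace ℝ (Fin n) := x₀ + (u : EuclideanSpace ℝ (Fin n)) with hxdef
  have hBx : B x = ξ := by
    rw [hxdef, map_add, hBx₀, LinearMap.mem_ker.mp u.2, add_zero]
  have hPres : P (y - A x) = 0 := by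
    have h1 : y - A x = (y - A x₀) - A (u : EuclideanSpace ℝ (Fin n)) := by
      rw [hxdef, map_add]; abel
    rw [h1, map_sub, ← hTapp, hu, sub_self]
  have hres_perp : y - A x ∈ Vᗮ := by
    rw [Submodule.mem_orthogonal]
    intro w hw
    rw [real_inner_comm, hPinner (y - A x) ⟨w, hw⟩, hPres]
    simp
  obtain ⟨η, hη⟩ := hVperp ▸ hres_perp
  have hAxη : A x + Bt η = y := by rw [hη]; abel
  -- norm bound for u
  have hun : ‖(u : EuclideanSpace ℝ (Fin n))‖ ≤ (1 / a) * (‖y‖ + b * ‖x₀‖) := by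
    have hAu := hco (u : EuclideanSpace ℝ (Fin n)) (LinearMap.mem_ker.mp u.2)
    have h1 : (inner ℝ ((u : EuclideanSpace ℝ (Fin n)))
        (A (u : EuclideanSpace ℝ (Fin n))) : ℝ)
        = inner ℝ (y - A x₀) ((u : EuclideanSpace ℝ (Fin n))) := by
      rw [real_inner_comm, hPinner (A (u : EuclideanSpace ℝ (Fin n))) u, ← hTapp, hu,
        ← hPinner (y - A x₀) u]
    have h2 : (inner ℝ (y - A x₀) ((u : EuclideanSpace ℝ (Fin n))) : ℝ)
        ≤ (‖y‖ + b * ‖x₀‖) * ‖(u : EuclideanSpace ℝ (Fin n))‖ := by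
      calc (inner ℝ (y - A x₀) ((u : EuclideanSpace ℝ (Fin n))) : ℝ)
          ≤ ‖y - A x₀‖ * ‖(u : EuclideanSpace ℝ (Fin n))‖ := real_inner_le_norm _ _
      _ ≤ (‖y‖ + b * ‖x₀‖) * ‖(u : EuclideanSpace ℝ (Fin n))‖ := by
          apply mul_le_mul_of_nonneg_right _ (norm_nonneg _)
          calc ‖y - A x₀‖ ≤ ‖y‖ + ‖A x₀‖ := norm_sub_le _ _
          _ ≤ ‖y‖ + b * ‖x₀‖ := by linarith [hAb x₀]
    rw [h1] at hAu
    rcases (norm_nonneg ((u : EuclideanSpace ℝ (Fin n)))).eq_or_lt with h0 | h0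
    · rw [← h0]; positivity
    · have h5 : ‖(u : EuclideanSpace ℝ (Fin n))‖ * (a * ‖(u : EuclideanSpace ℝ (Fin n))‖)
          ≤ ‖(u : EuclideanSpace ℝ (Fin n))‖ * (‖y‖ + b * ‖x₀‖) := by
        calc ‖(u : EuclideanSpace ℝ (Fin n))‖ * (a * ‖(u : EuclideanSpace ℝ (Fin n))‖)
            = a * ‖(u : EuclideanSpace ℝ (Fin n))‖ ^ 2 := by ring
        _ ≤ (‖y‖ + b * ‖x₀‖) * ‖(u : EuclideanSpace ℝ (Fin n))‖ := le_trans hAu h2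
        _ = ‖(u : EuclideanSpace ℝ (Fin n))‖ * (‖y‖ + b * ‖x₀‖) := by ring
      have h6 : a * ‖(u : EuclideanSpace ℝ (Fin n))‖ ≤ ‖y‖ + b * ‖x₀‖ :=
        le_of_mul_le_mul_left h5 h0
      calc ‖(u : EuclideanSpace ℝ (Fin n))‖
          = (1 / a) * (a * ‖(u : EuclideanSpace ℝ (Fin n))‖) := by field_simp
      _ ≤ (1 / a) * (‖y‖ + b * ‖x₀‖) := mul_le_mul_of_nonneg_left h6 (by positivity)
  have hxn : ‖x‖ ≤ (1 / a) * ‖y‖ + (1 + b / a) * (1 / c) * ‖ξ‖ := by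
    have h1 : ‖x‖ ≤ ‖x₀‖ + ‖(u : EuclideanSpace ℝ (Fin n))‖ := norm_add_le _ _
    have h2 : b / a * ‖x₀‖ ≤ b / a * ((1 / c) * ‖ξ‖) :=
      mul_le_mul_of_nonneg_left hx₀n (div_nonneg hb0 ha.le)
    have h3 : (1 / a) * (‖y‖ + b * ‖x₀‖) = (1 / a) * ‖y‖ + b / a * ‖x₀‖ := by
      ring
    have h4 : (1 + b / a) * (1 / c) * ‖ξ‖ = (1 / c) * ‖ξ‖ + b / a * ((1 / c) * ‖ξ‖) := by ring
    linarith
  have hηn : ‖η‖ ≤ (1 + b / a) * (1 / c) * ‖y‖ + (b / c ^ 2) * (1 + b / a) * ‖ξ‖ := by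
    have h1 : c * ‖η‖ ≤ ‖y‖ + b * ‖x‖ := by
      calc c * ‖η‖ ≤ ‖Bt η‖ := hYt' η
      _ = ‖y - A x‖ := by rw [hη]
      _ ≤ ‖y‖ + ‖A x‖ := norm_sub_le _ _
      _ ≤ ‖y‖ + b * ‖x‖ := by linarith [hAb x]
    have h2 : b * ‖x‖ ≤ b * ((1 / a) * ‖y‖ + (1 + b / a) * (1 / c) * ‖ξ‖) :=
      mul_le_mul_of_nonneg_left hxn hb0
    have h3 : c * ((1 + b / a) * (1 / c) * ‖y‖ + (b / c ^ 2) * (1 + b / a) * ‖ξ‖)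
        = ‖y‖ + b / a * ‖y‖ + b / c * (1 + b / a) * ‖ξ‖ := by
      field_simp
    have h4 : b * ((1 / a) * ‖y‖ + (1 + b / a) * (1 / c) * ‖ξ‖)
        = b / a * ‖y‖ + b / c * (1 + b / a) * ‖ξ‖ := by
      field_simp
    rw [← mul_le_mul_iff_right₀ hc]
    rw [h3]
    linarith
  refine ⟨x, η, ⟨hAxη, hBx⟩, ?_, hxn, hηn⟩
  intro x' η' ⟨h1', h2'⟩
  have h1'' : A x' + Bt η' = y := h1'
  have h2'' : B x' = ξ := h2'
  have hd : B (x' - x) = 0 := by rw [map_sub, h2'', hBx, sub_self]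
  have he : A (x' - x) + Bt (η' - η) = 0 := by
    rw [map_sub, map_sub,
      show A x' - A x + (Bt η' - Bt η) = (A x' + Bt η') - (A x + Bt η) from by abel,
      h1'', hAxη, sub_self]
  have hip : (inner ℝ (x' - x) (A (x' - x)) : ℝ) = 0 := by
    have h5 : A (x' - x) = - Bt (η' - η) := by
      rw [eq_neg_iff_add_eq_zero]; exact he
    rw [h5, inner_neg_right, real_inner_comm, hBtinner, hd, inner_zero_right, neg_zero]
  have hx'x : x' = x := by
    have h6 := hco (x' - x) hd
    rw [hip] at h6
    have h6' : a * ‖x' - x‖ ^ 2 ≤ a * 0 := by linarith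
    have h7 : ‖x' - x‖ ^ 2 ≤ 0 := (mul_le_mul_iff_right₀ ha).mp h6'
    have h7' : ‖x' - x‖ ^ 2 = 0 := le_antisymm h7 (sq_nonneg _)
    have h7'' : ‖x' - x‖ = 0 := sq_eq_zero_iff.mp h7'
    exact sub_eq_zero.mp (norm_eq_zero.mp h7'')
  refine ⟨hx'x, ?_⟩
  have h8 : Bt (η' - η) = 0 := by
    rw [hx'x] at he
    simpa using he
  exact sub_eq_zero.mp (hBt_inj _ h8)
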